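/- Let x₁, …, x_M ∈ F₂ⁿ be M ≥ 1 distinct vectors all contained in a Hamming ball of radius t, i.e., there is z ∈ F₂ⁿ with d_H(x_i, z) ≤ t for all i. Let w, t be nonnegative integers with w + t ≤ n/2, and let e be a uniformly random vector in F₂ⁿ of Hamming weight exactly w. Then for every decoder ψ : F₂ⁿ → {1,…,M}, the average probability of correct decoding satisfies (1/M)·Σ_{i=1}^{M} Pr(ψ(x_i + e) = i) ≤ (2t+1)·C(n, w+t) / (M·C(n, w)), where C(n, w) denotes the binomial coefficient n choose w. -/

import Mathlib

lemma zmod2_ne' : ∀ a b : ZMod 2, a ≠ b → a = b + 1 := by decide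

lemma choose_mono_half' {n k m : ℕ} (hkm : k ≤ m) (hm : m ≤ n / 2) :
    n.choose k ≤ n.choose m := by
  induction m, hkm using Nat.le_induction with
  | base => rfl
  | succ m hm' ih =>
      exact (ih (le_trans (Nat.le_succ m) hm)).trans
        (Nat.choose_le_succ_of_lt_half_left (Nat.lt_of_succ_le hm))

lemma sphere_card' (n k : ℕ) (z : Fin n → ZMod 2) :
    (Finset.univ.filter fun y : Fin n → ZMod 2 => hammingDist y z = k).card
      = n.choose k := by
  have h : n.choose k = (Finset.powersetCard k (Finset.univ : Finset (Fin n))).card := by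
    rw [Finset.card_powersetCard, Finset.card_univ, Fintype.card_fin]
  rw [h]
  apply Finset.card_bij (fun y _ => Finset.univ.filter fun j => y j ≠ z j)
  · intro y hy
    simp only [Finset.mem_filter, Finset.mem_univ, true_and] at hy
    simp only [Finset.mem_powersetCard]
    exact ⟨Finset.filter_subset _ _, hy⟩
  · intro y₁ h₁ y₂ h₂ heq
    funext j
    have := Finset.ext_iff.mp heq j
    simp only [Finset.mem_filter, Finset.mem_univ, true_and] at this
    rcases eq_or_ne (y₁ j) (z j) with h | h
    · rcases eq_or_ne (y₂ j) (z j) with h' | h'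
      · rw [h, h']
      · exact absurd (this.mpr h') (by rw [h]; simp)
    · rw [zmod2_ne' _ _ h, zmod2_ne' _ _ (this.mp h)]
  · intro s hs
    simp only [Finset.mem_powersetCard] at hs
    refine ⟨fun j => if j ∈ s then z j + 1 else z j, ?_, ?_⟩
    · simp only [Finset.mem_filter, Finset.mem_univ, true_and]
      rw [hammingDist, ← hs.2]
      congr 1
      ext j
      by_cases hj : j ∈ s <;> simp [hj]
    · ext j
      by_cases hj : j ∈ s <;> simp [hj]

/-- ball-packing bound: if `M ≥ 1` distinct vectors `x₁,…,x_M ∈ F₂ⁿ` lie in a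
Hamming ball of radius `t`, `w + t ≤ n/2`, and the channel adds a uniformly random error
vector of weight exactly `w`, then any decoder's average probability of correct decoding is
at most `(2t+1) C(n, w+t) / (M C(n, w))`. -/
theorem stmt_9 {n M w t : ℕ} (hM : 1 ≤ M)
    (x : Fin M → (Fin n → ZMod 2)) (hx : Function.Injective x)
    (z : Fin n → ZMod 2) (hball : ∀ i, hammingDist (x i) z ≤ t)
    (hwt : 2 * (w + t) ≤ n)
    (ψ : (Fin n → ZMod 2) → Fin M) :
    (1 / (M : ℝ)) * ∑ i : Fin M,
        ((Finset.univ.filter fun e : Fin n → ZMod 2 =>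
            hammingNorm e = w ∧ ψ (x i + e) = i).card : ℝ) / (n.choose w : ℝ)
      ≤ ((2 * (t : ℝ) + 1) * (n.choose (w + t) : ℝ)) / ((M : ℝ) * (n.choose w : ℝ)) := by
  classical
  set B : Finset (Fin n → ZMod 2) :=
    Finset.univ.filter fun y => w ≤ hammingDist y z + t ∧ hammingDist y z ≤ w + t with hB
  -- Step 1: each summand injects into a fiber of B
  have step1 : ∀ i : Fin M,
      (Finset.univ.filter fun e : Fin n → ZMod 2 =>
          hammingNorm e = w ∧ ψ (x i + e) = i).card
        ≤ (B.filter fun y => ψ y = i).card := by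
    intro i
    apply Finset.card_le_card_of_injOn (fun e => x i + e)
    · intro e he
      simp only [Finset.mem_coe, Finset.mem_filter, Finset.mem_univ, true_and] at he
      obtain ⟨hw, hψ⟩ := he
      have hd : hammingDist (x i + e) (x i) = w := by
        rw [hammingDist_eq_hammingNorm]
        simpa [show -e = e from funext fun j => ZMod.neg_eq_self_mod_two (e j)] using hw
      simp only [hB, Finset.mem_coe, Finset.mem_filter, Finset.mem_univ, true_and]
      refine ⟨⟨?_, ?_⟩, hψ⟩
      · calc w = hammingDist (x i + e) (x i) := hd.symm
          _ ≤ hammingDist (x i + e) z + hammingDist z (x i) := hammingDist_triangle _ _ _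
          _ ≤ hammingDist (x i + e) z + t := by
              have h1 := hball i
              have h2 : hammingDist z (x i) = hammingDist (x i) z := hammingDist_comm _ _
              omega
      · calc hammingDist (x i + e) z
            ≤ hammingDist (x i + e) (x i) + hammingDist (x i) z := hammingDist_triangle _ _ _
          _ ≤ w + t := by have := hball i; omega
    · intro e₁ _ e₂ _ h
      exact add_left_cancel h
  -- Step 2: the fibers of B over ψ partition B
  have step2 : ∑ i : Fin M, (B.filter fun y => ψ y = i).card = B.card :=
    (Finset.card_eq_sum_card_fiberwise (f := ψ) (t := Finset.univ)
      (fun y _ => Finset.mem_univ _)).symm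
  -- Step 3: B.card ≤ (2t+1) * C(n, w+t)
  have hhalf : w + t ≤ n / 2 := Nat.le_div_iff_mul_le (by norm_num) |>.mpr (by omega)
  have step3 : B.card ≤ (2 * t + 1) * n.choose (w + t) := by
    have hcard : B.card = ∑ k ∈ Finset.Icc (w - t) (w + t),
        (B.filter fun y => hammingDist y z = k).card := by
      apply Finset.card_eq_sum_card_fiberwise
      intro y hy
      simp only [hB, Finset.mem_coe, Finset.mem_filter, Finset.mem_univ, true_and] at hy
      simp only [Finset.mem_coe, Finset.mem_Icc]
      omega
    rw [hcard]
    calc ∑ k ∈ Finset.Icc (w - t) (w + t), (B.filter fun y => hammingDist y z = k).card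
        ≤ ∑ k ∈ Finset.Icc (w - t) (w + t), n.choose (w + t) := by
          apply Finset.sum_le_sum
          intro k hk
          simp only [Finset.mem_Icc] at hk
          calc (B.filter fun y => hammingDist y z = k).card
              ≤ (Finset.univ.filter fun y : Fin n → ZMod 2 => hammingDist y z = k).card := by
                apply Finset.card_le_card
                intro y hy
                simp only [Finset.mem_filter] at hy ⊢
                exact ⟨Finset.mem_univ _, hy.2⟩
            _ = n.choose k := sphere_card' n k z
            _ ≤ n.choose (w + t) := choose_mono_half' hk.2 hhalf
      _ = (Finset.Icc (w - t) (w + t)).card * n.choose (w + t) := by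
          rw [Finset.sum_const, smul_eq_mul]
      _ ≤ (2 * t + 1) * n.choose (w + t) := by
          apply Nat.mul_le_mul_right
          rw [Nat.card_Icc]
          omega
  -- Combine in ℕ
  have hkey : ∑ i : Fin M, (Finset.univ.filter fun e : Fin n → ZMod 2 =>
      hammingNorm e = w ∧ ψ (x i + e) = i).card ≤ (2 * t + 1) * n.choose (w + t) := by
    calc _ ≤ ∑ i : Fin M, (B.filter fun y => ψ y = i).card := Finset.sum_le_sum fun i _ => step1 i
      _ = B.card := step2
      _ ≤ _ := step3
  -- Pass to ℝ
  have hMpos : (0:ℝ) < M := by exact_mod_cast hM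
  have hCpos : (0:ℝ) < (n.choose w : ℝ) := by
    exact_mod_cast Nat.choose_pos (by omega : w ≤ n)
  rw [← Finset.sum_div, one_div, inv_mul_eq_div, div_div,
    mul_comm ((n.choose w : ℝ)) (M : ℝ)]
  apply div_le_div_of_nonneg_right ?_ (by positivity)
  push_cast
  calc ∑ i : Fin M, ((Finset.univ.filter fun e : Fin n → ZMod 2 =>
          hammingNorm e = w ∧ ψ (x i + e) = i).card : ℝ)
      = ((∑ i : Fin M, (Finset.univ.filter fun e : Fin n → ZMod 2 =>
          hammingNorm e = w ∧ ψ (x i + e) = i).card : ℕ) : ℝ) := by push_cast; ring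
    _ ≤ (((2 * t + 1) * n.choose (w + t) : ℕ) : ℝ) := by exact_mod_cast hkey
    _ = (2 * (t:ℝ) + 1) * (n.choose (w + t) : ℝ) := by push_cast; ring
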